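/- Moment propagation: Let S_{a,b} : [0,T] → [0,∞) for integers 0 ≤ a,b ≤ 4 satisfy S_{0,0}(t) = S_{0,0}(0) ≤ ε₀, S_{a,b}(0) ≤ ε₀, and S_{a,b}(t) ≤ S_{a,b}(0) + ∫₀ᵗ F(s)[s·a·S_{a−1,b}(s) + b·S_{a,b−1}(s)] ds, where F(s) ≤ C ε₁² (1+s²)⁻¹ log(2+s). Then for all 0 ≤ a,b ≤ 4 and t ∈ [0,T]: S_{a,b}(t) ≤ ε₀ + C' ε₀ ε₁ (log(2+t))^{2a}, for some constant C' depending only on C (assuming ε₁ ≤ 1). -/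

import Mathlib

open Real MeasureTheory intervalIntegral

lemma hasDerivAt_logpow (a : ℕ) (x : ℝ) (hx : 0 ≤ x) :
    HasDerivAt (fun s => Real.log (2+s) ^ (2*a))
      ((2*a : ℕ) * Real.log (2+x) ^ (2*a-1) * (2+x)⁻¹) x := by
  have h2 : (2:ℝ)+x ≠ 0 := by positivity
  have h1 : HasDerivAt (fun s : ℝ => Real.log (2+s)) ((2+x)⁻¹) x := by
    simpa using ((hasDerivAt_id x).const_add 2).log h2
  simpa [mul_comm, mul_assoc] using h1.fun_pow (2*a)

lemma contOn_logpow (a : ℕ) (t : ℝ) :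
    ContinuousOn (fun s => (2*a : ℕ) * Real.log (2+s) ^ (2*a-1) * (2+s)⁻¹) (Set.Icc (0:ℝ) t) := by
  apply ContinuousOn.mul
  · apply ContinuousOn.mul continuousOn_const
    apply ContinuousOn.pow
    intro s hs
    exact (Real.continuousAt_log (by nlinarith [hs.1] : (2:ℝ)+s ≠ 0)).comp
      (by fun_prop : Continuous fun s : ℝ => 2+s).continuousAt |>.continuousWithinAt
  · apply ContinuousOn.inv₀ (by fun_prop)
    intro s hs
    nlinarith [hs.1]

lemma int_logpow (a : ℕ) (t : ℝ) (ht : 0 ≤ t) :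
    ∫ s in (0:ℝ)..t, (2*a : ℕ) * Real.log (2+s) ^ (2*a-1) * (2+s)⁻¹
      = Real.log (2+t) ^ (2*a) - Real.log 2 ^ (2*a) := by
  have := intervalIntegral.integral_eq_sub_of_hasDerivAt
    (f := fun s => Real.log (2+s) ^ (2*a))
    (f' := fun s => (2*a : ℕ) * Real.log (2+s) ^ (2*a-1) * (2+s)⁻¹)
    (a := 0) (b := t)
    (fun x hx => hasDerivAt_logpow a x (by
      rcases Set.mem_uIcc.mp hx with h | h
      · exact h.1
      · linarith [h.1, h.2]))
    (((contOn_logpow a t).mono (by rw [Set.uIcc_of_le ht])).intervalIntegrable)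
  simpa using this

lemma hasDerivAt_invsqrt (x : ℝ) (hx : 0 ≤ x) :
    HasDerivAt (fun s : ℝ => -2 * (1+s) ^ (-(1/2) : ℝ)) ((1+x) ^ (-(3/2) : ℝ)) x := by
  have h1 : HasDerivAt (fun s : ℝ => 1+s) 1 x := (hasDerivAt_id x).const_add 1
  have h2 : HasDerivAt (fun y : ℝ => y ^ (-(1/2) : ℝ)) ((-(1/2) : ℝ) * (1+x) ^ ((-(1/2) : ℝ) - 1)) (1+x) :=
    Real.hasDerivAt_rpow_const (Or.inl (ne_of_gt (by linarith)))
  have h3 := (h2.comp x h1).const_mul (-2 : ℝ)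
  have he : (-(1/2) : ℝ) - 1 = -(3/2) := by norm_num
  refine HasDerivAt.congr_deriv h3 ?_
  rw [he]; ring

lemma contOn_rpow32 (t : ℝ) :
    ContinuousOn (fun s : ℝ => (1+s) ^ (-(3/2) : ℝ)) (Set.Icc (0:ℝ) t) := by
  apply ContinuousOn.rpow_const (by fun_prop)
  intro s hs
  left
  nlinarith [hs.1]

lemma int_rpow32 (t : ℝ) (ht : 0 ≤ t) :
    ∫ s in (0:ℝ)..t, (1+s) ^ (-(3/2) : ℝ) ≤ 2 := by
  have := intervalIntegral.integral_eq_sub_of_hasDerivAt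
    (f := fun s : ℝ => -2 * (1+s) ^ (-(1/2) : ℝ))
    (f' := fun s : ℝ => (1+s) ^ (-(3/2) : ℝ))
    (a := 0) (b := t)
    (fun x hx => hasDerivAt_invsqrt x (by
      rcases Set.mem_uIcc.mp hx with h | h
      · exact h.1
      · linarith [h.1, h.2]))
    (((contOn_rpow32 t).mono (by rw [Set.uIcc_of_le ht])).intervalIntegrable)
  rw [this]
  have h1 : (0:ℝ) ≤ (1+t) ^ (-(1/2) : ℝ) := Real.rpow_nonneg (by linarith) _
  simp only [add_zero, Real.one_rpow]
  nlinarith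

lemma aux_frac (s : ℝ) (hs : 0 ≤ s) : s * (1+s^2)⁻¹ ≤ 2 * (2+s)⁻¹ := by
  rw [inv_eq_one_div, inv_eq_one_div, mul_one_div, mul_one_div,
    div_le_div_iff₀ (by positivity) (by positivity)]
  nlinarith [sq_nonneg (s-1)]

lemma aux_one_le (x : ℝ) (hx : Real.log 2 ≤ x) (m : ℕ) (hm : m ≤ 8) :
    1 ≤ ((Real.log 2)^8)⁻¹ * x ^ m := by
  have h2 : (0:ℝ) < Real.log 2 := Real.log_pos (by norm_num)
  have h1 : Real.log 2 ≤ 1 := by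
    have := Real.log_le_sub_one_of_pos (by norm_num : (0:ℝ) < 2)
    linarith
  have ha : (Real.log 2)^8 ≤ (Real.log 2)^m := pow_le_pow_of_le_one h2.le h1 hm
  have hb : (Real.log 2)^m ≤ x^m := pow_le_pow_left₀ h2.le hx m
  calc (1:ℝ) = ((Real.log 2)^8)⁻¹ * (Real.log 2)^8 := by
        rw [inv_mul_cancel₀ (by positivity)]
    _ ≤ ((Real.log 2)^8)⁻¹ * x ^ m := by
        apply mul_le_mul_of_nonneg_left (le_trans ha hb) (by positivity)

lemma aux_logbound (s : ℝ) (hs : 0 ≤ s) (m : ℕ) (hm : m ≤ 9) :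
    (1+s^2)⁻¹ * Real.log (2+s) ^ m ≤ (4 * 19^9 : ℝ) * (1+s) ^ (-(3/2) : ℝ) := by
  have h2s : (0:ℝ) < 2 + s := by linarith
  have h1s : (0:ℝ) < 1 + s := by linarith
  have hL0 : 0 ≤ Real.log (2+s) := Real.log_nonneg (by linarith)
  set L := Real.log (2+s) with hLdef
  have hr : (0:ℝ) < (2+s) ^ ((1:ℝ)/18) := Real.rpow_pos_of_pos h2s _
  have hLa : L ≤ 18 * (2+s) ^ ((1:ℝ)/18) := by
    have := Real.log_rpow h2s ((1:ℝ)/18)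
    have hlog : Real.log ((2+s) ^ ((1:ℝ)/18)) ≤ (2+s) ^ ((1:ℝ)/18) := by
      have := Real.log_le_sub_one_of_pos hr; linarith
    rw [hLdef]
    nlinarith
  have hone : (1:ℝ) ≤ (2+s) ^ ((1:ℝ)/18) :=
    Real.one_le_rpow (by linarith) (by norm_num)
  have h3 : L ^ m ≤ (1+L)^9 := by
    calc L ^ m ≤ (1+L)^m := pow_le_pow_left₀ hL0 (by linarith) m
      _ ≤ (1+L)^9 := pow_le_pow_right₀ (by linarith) hm
  have h4 : (1+L)^9 ≤ (19 * (2+s) ^ ((1:ℝ)/18))^9 :=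
    pow_le_pow_left₀ (by linarith) (by nlinarith) 9
  have h5 : (19 * (2+s) ^ ((1:ℝ)/18))^9 = 19^9 * (2+s) ^ ((1:ℝ)/2) := by
    rw [mul_pow, ← Real.rpow_natCast ((2+s) ^ ((1:ℝ)/18)) 9, ← Real.rpow_mul h2s.le]
    norm_num
  have h6 : (2+s) ^ ((1:ℝ)/2) ≤ 2 * (1+s) ^ ((1:ℝ)/2) := by
    have hle : (2+s) ^ ((1:ℝ)/2) ≤ (4*(1+s)) ^ ((1:ℝ)/2) :=
      Real.rpow_le_rpow (by linarith) (by linarith) (by norm_num)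
    have h4r : ((4:ℝ)*(1+s)) ^ ((1:ℝ)/2) = 2 * (1+s) ^ ((1:ℝ)/2) := by
      rw [Real.mul_rpow (by norm_num) h1s.le]
      congr 1
      rw [show (4:ℝ) = 2^(2:ℕ) by norm_num, ← Real.rpow_natCast 2 2,
        ← Real.rpow_mul (by norm_num)]
      norm_num
    linarith
  have h7 : (1+s^2)⁻¹ ≤ 2 * ((1+s)^(2:ℕ))⁻¹ := by
    rw [inv_eq_one_div, inv_eq_one_div, mul_one_div, div_le_div_iff₀ (by positivity) (by positivity)]
    nlinarith [sq_nonneg (s-1)]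
  have h8 : ((1+s)^(2:ℕ))⁻¹ * (1+s) ^ ((1:ℝ)/2) = (1+s) ^ (-(3/2) : ℝ) := by
    rw [← Real.rpow_natCast (1+s) 2, ← Real.rpow_neg h1s.le, ← Real.rpow_add h1s]
    norm_num
  have hLm : L ^ m ≤ 19^9 * (2 * (1+s) ^ ((1:ℝ)/2)) := by
    calc L ^ m ≤ 19^9 * (2+s) ^ ((1:ℝ)/2) := by rw [← h5]; exact le_trans h3 h4
      _ ≤ 19^9 * (2 * (1+s) ^ ((1:ℝ)/2)) := by
          apply mul_le_mul_of_nonneg_left h6 (by positivity)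
  calc (1+s^2)⁻¹ * L ^ m
      ≤ (2 * ((1+s)^(2:ℕ))⁻¹) * (19^9 * (2 * (1+s) ^ ((1:ℝ)/2))) :=
        mul_le_mul h7 hLm (by positivity) (by positivity)
    _ = (4 * 19^9 : ℝ) * (((1+s)^(2:ℕ))⁻¹ * (1+s) ^ ((1:ℝ)/2)) := by ring
    _ = (4 * 19^9 : ℝ) * (1+s) ^ (-(3/2) : ℝ) := by rw [h8]

set_option maxHeartbeats 2000000 in
lemma key_lemma (C : ℝ) (hC : 0 < C) : ∀ n : ℕ, ∃ K : ℝ, 1 ≤ K ∧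
    ∀ (ε₀ ε₁ T : ℝ), 0 < ε₀ → ε₀ ≤ 1 → 0 < ε₁ → ε₁ ≤ 1 → 0 < T →
    ∀ (F : ℝ → ℝ) (S : ℕ → ℕ → ℝ → ℝ),
      Measurable F →
      (∀ s ∈ Set.Icc (0 : ℝ) T, 0 ≤ F s) →
      (∀ s ∈ Set.Icc (0 : ℝ) T,
        F s ≤ C * ε₁ ^ 2 * (1 + s ^ 2)⁻¹ * Real.log (2 + s)) →
      (∀ a b : ℕ, a ≤ 4 → b ≤ 4 → ContinuousOn (S a b) (Set.Icc 0 T)) →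
      (∀ a b : ℕ, a ≤ 4 → b ≤ 4 → ∀ t ∈ Set.Icc (0 : ℝ) T, 0 ≤ S a b t) →
      (∀ t ∈ Set.Icc (0 : ℝ) T, S 0 0 t = S 0 0 0) →
      (∀ a b : ℕ, a ≤ 4 → b ≤ 4 → S a b 0 ≤ ε₀) →
      (∀ a b : ℕ, a ≤ 4 → b ≤ 4 → ∀ t ∈ Set.Icc (0 : ℝ) T,
        S a b t ≤ S a b 0 + ∫ s in (0 : ℝ)..t,
          F s * (s * (a : ℝ) * S (a - 1) b s + (b : ℝ) * S a (b - 1) s)) →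
      ∀ a b : ℕ, a ≤ 4 → b ≤ 4 → a + b ≤ n → ∀ t ∈ Set.Icc (0 : ℝ) T,
        S a b t ≤ ε₀ + K * ε₀ * ε₁ * (Real.log (2 + t)) ^ (2 * a) := by
  intro n
  induction n with
  | zero =>
    refine ⟨1, le_refl _, ?_⟩
    intro ε₀ ε₁ T hε₀ hε₀1 hε₁ hε₁1 hT F S hFm hF0 hFb hScont hS0' hS00 hSinit hrec a b ha hb hab t ht
    have ha0 : a = 0 := by omega
    have hb0 : b = 0 := by omega
    subst ha0; subst hb0
    have h1 : S 0 0 t = S 0 0 0 := hS00 t ht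
    have h2 : S 0 0 0 ≤ ε₀ := hSinit 0 0 (by norm_num) (by norm_num)
    have h3 : (0:ℝ) ≤ 1 * ε₀ * ε₁ * Real.log (2+t) ^ (2*0) := by norm_num; positivity
    linarith
  | succ n IH =>
    obtain ⟨K, hK1, hK⟩ := IH
    have hK0 : (0:ℝ) ≤ K := by linarith
    set c8 : ℝ := ((Real.log 2)^8)⁻¹ with hc8def
    have hlog2 : (0:ℝ) < Real.log 2 := Real.log_pos (by norm_num)
    have hc8pos : (0:ℝ) < c8 := by rw [hc8def]; positivity
    have hlog21 : Real.log 2 ≤ 1 := by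
      have := Real.log_le_sub_one_of_pos (by norm_num : (0:ℝ) < 2); linarith
    have hc81 : (1:ℝ) ≤ c8 := by
      rw [hc8def, one_le_inv_iff₀]
      exact ⟨by positivity, pow_le_one₀ hlog2.le hlog21⟩
    clear_value c8
    set M : ℝ := 4 * 19^9 with hMdef
    have hM : (0:ℝ) < M := by rw [hMdef]; norm_num
    clear_value M
    have hbig : (0:ℝ) < C * (1+K) * c8 * (1 + 8*M*c8) := by
      apply mul_pos (mul_pos (mul_pos hC (by linarith)) hc8pos)
      nlinarith
    refine ⟨K + C * (1+K) * c8 * (1 + 8*M*c8), by linarith, ?_⟩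
    set K' : ℝ := K + C * (1+K) * c8 * (1 + 8*M*c8) with hK'def
    have hKK' : K ≤ K' := by rw [hK'def]; linarith
    intro ε₀ ε₁ T hε₀ hε₀1 hε₁ hε₁1 hT F S hFm hF0 hFb hScont hSnn hS00 hSinit hrec a b ha hb hab t ht
    have hK'0 : (0:ℝ) ≤ K' := by linarith
    have ht0 : 0 ≤ t := ht.1
    have htT : t ≤ T := ht.2
    have hLt : Real.log 2 ≤ Real.log (2+t) := Real.log_le_log (by norm_num) (by linarith)
    have hLt0 : 0 ≤ Real.log (2+t) := by linarith
    by_cases hcase : a + b ≤ n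
    · have := hK ε₀ ε₁ T hε₀ hε₀1 hε₁ hε₁1 hT F S hFm hF0 hFb hScont hSnn hS00 hSinit hrec
        a b ha hb hcase t ht
      refine le_trans this ?_
      have : K * ε₀ * ε₁ * Real.log (2+t) ^ (2*a) ≤ K' * ε₀ * ε₁ * Real.log (2+t) ^ (2*a) := by
        apply mul_le_mul_of_nonneg_right _ (by positivity)
        apply mul_le_mul_of_nonneg_right _ hε₁.le
        exact mul_le_mul_of_nonneg_right hKK' hε₀.le
      linarith
    · have habn : a + b = n + 1 := by omega
      have hE : (0:ℝ) < C * ε₀ * ε₁^2 * ((1+K) * c8) := by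
        apply mul_pos (mul_pos (mul_pos hC hε₀) (by positivity))
        exact mul_pos (by linarith) hc8pos
      set E : ℝ := C * ε₀ * ε₁^2 * ((1+K) * c8) with hEdef
      clear_value E
      set φ₁ : ℝ → ℝ := fun s => E * ((2*a : ℕ) * Real.log (2+s) ^ (2*a-1) * (2+s)⁻¹) with hφ₁def
      clear_value φ₁
      set φ₂ : ℝ → ℝ := fun s => E * (b:ℝ) * (M * (1+s) ^ (-(3/2) : ℝ)) with hφ₂def
      clear_value φ₂
      have hsub : Set.Icc (0:ℝ) t ⊆ Set.Icc (0:ℝ) T := Set.Icc_subset_Icc le_rfl htT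
      have hpt : ∀ s ∈ Set.Icc (0:ℝ) t,
          F s * (s * (a:ℝ) * S (a-1) b s + (b:ℝ) * S a (b-1) s) ≤ φ₁ s + φ₂ s := by
        intro s hs
        have hs0 : 0 ≤ s := hs.1
        have hsT : s ∈ Set.Icc (0:ℝ) T := hsub hs
        have h2s : (0:ℝ) < 2 + s := by linarith
        have hLs : Real.log 2 ≤ Real.log (2+s) := Real.log_le_log (by norm_num) (by linarith)
        have hLs0 : (0:ℝ) ≤ Real.log (2+s) := by linarith
        have hFbs := hFb s hsT
        have hF0s := hF0 s hsT
        have hA : F s * (s * (a:ℝ) * S (a-1) b s) ≤ φ₁ s := by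
          rcases Nat.eq_zero_or_pos a with haz | hap
          · subst haz
            simp [hφ₁def]
          · have hS1 := hK ε₀ ε₁ T hε₀ hε₀1 hε₁ hε₁1 hT F S hFm hF0 hFb hScont hSnn hS00
              hSinit hrec (a-1) b (by omega) hb (by omega) s hsT
            have hone := aux_one_le (Real.log (2+s)) hLs (2*(a-1)) (by omega)
            rw [← hc8def] at hone
            have hS1nn := hSnn (a-1) b (by omega) hb s hsT
            have hPnn : (0:ℝ) ≤ Real.log (2+s) ^ (2*(a-1)) := pow_nonneg hLs0 _
            have hS1' : S (a-1) b s ≤ (1+K) * c8 * ε₀ * Real.log (2+s) ^ (2*(a-1)) := by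
              have e1 : ε₀ ≤ ε₀ * (c8 * Real.log (2+s) ^ (2*(a-1))) :=
                le_mul_of_one_le_right hε₀.le hone
              have e2 : K * ε₀ * ε₁ * Real.log (2+s) ^ (2*(a-1))
                  ≤ K * ε₀ * (c8 * Real.log (2+s) ^ (2*(a-1))) := by
                have h9 : (K * ε₀ * Real.log (2+s) ^ (2*(a-1))) * ε₁
                    ≤ (K * ε₀ * Real.log (2+s) ^ (2*(a-1))) * c8 :=
                  mul_le_mul_of_nonneg_left (le_trans hε₁1 hc81)
                    (mul_nonneg (mul_nonneg hK0 hε₀.le) hPnn)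
                nlinarith [h9]
              nlinarith [hS1, e1, e2]
            have hfrac := aux_frac s hs0
            have hcoefnn : (0:ℝ) ≤ C * ε₁^2 * ε₀ * ((1+K)*c8) * (a:ℝ) := by
              apply mul_nonneg _ (Nat.cast_nonneg a)
              apply mul_nonneg (by positivity) (mul_nonneg (by linarith) hc8pos.le)
            calc F s * (s * (a:ℝ) * S (a-1) b s)
                ≤ (C * ε₁^2 * (1+s^2)⁻¹ * Real.log (2+s))
                    * (s * (a:ℝ) * ((1+K) * c8 * ε₀ * Real.log (2+s) ^ (2*(a-1)))) := by
                  apply mul_le_mul hFbs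
                    (mul_le_mul_of_nonneg_left hS1' (by positivity))
                    (mul_nonneg (mul_nonneg hs0 (Nat.cast_nonneg a)) hS1nn)
                    (mul_nonneg (by positivity) hLs0)
              _ = (C * ε₁^2 * ε₀ * ((1+K)*c8) * (a:ℝ))
                    * ((s * (1+s^2)⁻¹) * (Real.log (2+s) * Real.log (2+s) ^ (2*(a-1)))) := by
                  ring
              _ ≤ (C * ε₁^2 * ε₀ * ((1+K)*c8) * (a:ℝ))
                    * ((2 * (2+s)⁻¹) * (Real.log (2+s) * Real.log (2+s) ^ (2*(a-1)))) := by
                  exact mul_le_mul_of_nonneg_left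
                    (mul_le_mul_of_nonneg_right hfrac (mul_nonneg hLs0 hPnn)) hcoefnn
              _ = φ₁ s := by
                  simp only [hφ₁def]
                  have hexp : 2*a - 1 = 2*(a-1) + 1 := by omega
                  rw [hexp, pow_succ, hEdef]
                  push_cast
                  ring
        have hB : F s * ((b:ℝ) * S a (b-1) s) ≤ φ₂ s := by
          rcases Nat.eq_zero_or_pos b with hbz | hbp
          · subst hbz
            simp [hφ₂def]
          · have hS2 := hK ε₀ ε₁ T hε₀ hε₀1 hε₁ hε₁1 hT F S hFm hF0 hFb hScont hSnn hS00
              hSinit hrec a (b-1) ha (by omega) (by omega) s hsT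
            have hone := aux_one_le (Real.log (2+s)) hLs (2*a) (by omega)
            rw [← hc8def] at hone
            have hS2nn := hSnn a (b-1) ha (by omega) s hsT
            have hPnn : (0:ℝ) ≤ Real.log (2+s) ^ (2*a) := pow_nonneg hLs0 _
            have hS2' : S a (b-1) s ≤ (1+K) * c8 * ε₀ * Real.log (2+s) ^ (2*a) := by
              have e1 : ε₀ ≤ ε₀ * (c8 * Real.log (2+s) ^ (2*a)) :=
                le_mul_of_one_le_right hε₀.le hone
              have e2 : K * ε₀ * ε₁ * Real.log (2+s) ^ (2*a)
                  ≤ K * ε₀ * (c8 * Real.log (2+s) ^ (2*a)) := by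
                have h9 : (K * ε₀ * Real.log (2+s) ^ (2*a)) * ε₁
                    ≤ (K * ε₀ * Real.log (2+s) ^ (2*a)) * c8 :=
                  mul_le_mul_of_nonneg_left (le_trans hε₁1 hc81)
                    (mul_nonneg (mul_nonneg hK0 hε₀.le) hPnn)
                nlinarith [h9]
              nlinarith [hS2, e1, e2]
            have hlb := aux_logbound s hs0 (2*a+1) (by omega)
            have hcoefnn : (0:ℝ) ≤ C * ε₁^2 * ε₀ * ((1+K)*c8) * (b:ℝ) := by
              apply mul_nonneg _ (Nat.cast_nonneg b)
              apply mul_nonneg (by positivity) (mul_nonneg (by linarith) hc8pos.le)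
            calc F s * ((b:ℝ) * S a (b-1) s)
                ≤ (C * ε₁^2 * (1+s^2)⁻¹ * Real.log (2+s))
                    * ((b:ℝ) * ((1+K) * c8 * ε₀ * Real.log (2+s) ^ (2*a))) := by
                  apply mul_le_mul hFbs
                    (mul_le_mul_of_nonneg_left hS2' (Nat.cast_nonneg b))
                    (mul_nonneg (Nat.cast_nonneg b) hS2nn)
                    (mul_nonneg (by positivity) hLs0)
              _ = (C * ε₁^2 * ε₀ * ((1+K)*c8) * (b:ℝ))
                    * ((1+s^2)⁻¹ * Real.log (2+s) ^ (2*a+1)) := by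
                  rw [pow_succ]; ring
              _ ≤ (C * ε₁^2 * ε₀ * ((1+K)*c8) * (b:ℝ)) * ((4 * 19^9 : ℝ) * (1+s) ^ (-(3/2) : ℝ)) :=
                  mul_le_mul_of_nonneg_left hlb hcoefnn
              _ = φ₂ s := by
                  simp only [hφ₂def, hMdef, hEdef]
                  ring
        have heq : F s * (s * (a:ℝ) * S (a-1) b s + (b:ℝ) * S a (b-1) s)
            = F s * (s * (a:ℝ) * S (a-1) b s) + F s * ((b:ℝ) * S a (b-1) s) := by ring
        rw [heq]
        exact add_le_add hA hB
      have hfnn : ∀ s ∈ Set.Icc (0:ℝ) t,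
          0 ≤ F s * (s * (a:ℝ) * S (a-1) b s + (b:ℝ) * S a (b-1) s) := by
        intro s hs
        have hsT := hsub hs
        apply mul_nonneg (hF0 s hsT)
        exact add_nonneg
          (mul_nonneg (mul_nonneg hs.1 (Nat.cast_nonneg a)) (hSnn (a-1) b (by omega) hb s hsT))
          (mul_nonneg (Nat.cast_nonneg b) (hSnn a (b-1) ha (by omega) s hsT))
      have hcont1 : ContinuousOn φ₁ (Set.Icc (0:ℝ) t) := by
        rw [hφ₁def]; exact continuousOn_const.mul (contOn_logpow a t)
      have hcont2 : ContinuousOn φ₂ (Set.Icc (0:ℝ) t) := by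
        rw [hφ₂def]; exact continuousOn_const.mul (continuousOn_const.mul (contOn_rpow32 t))
      have hint1 : IntervalIntegrable φ₁ volume 0 t :=
        (hcont1.mono (by rw [Set.uIcc_of_le ht0])).intervalIntegrable
      have hint2 : IntervalIntegrable φ₂ volume 0 t :=
        (hcont2.mono (by rw [Set.uIcc_of_le ht0])).intervalIntegrable
      have hintg : IntervalIntegrable (fun s => φ₁ s + φ₂ s) volume 0 t := hint1.add hint2
      have hIoc : Set.Ioc (0:ℝ) t ⊆ Set.Icc (0:ℝ) T :=
        subset_trans Set.Ioc_subset_Icc_self hsub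
      have hS1me : AEMeasurable (S (a-1) b) (volume.restrict (Set.Ioc 0 t)) :=
        ((hScont (a-1) b (by omega) hb).mono hIoc).aemeasurable measurableSet_Ioc
      have hS2me : AEMeasurable (S a (b-1)) (volume.restrict (Set.Ioc 0 t)) :=
        ((hScont a (b-1) ha (by omega)).mono hIoc).aemeasurable measurableSet_Ioc
      have hfm : AEStronglyMeasurable
          (fun s => F s * (s * (a:ℝ) * S (a-1) b s + (b:ℝ) * S a (b-1) s))
          (volume.restrict (Set.Ioc 0 t)) := by
        apply AEMeasurable.aestronglyMeasurable
        exact hFm.aemeasurable.mul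
          (((aemeasurable_id.mul_const (a:ℝ)).mul hS1me).add (hS2me.const_mul (b:ℝ)))
      have hintf : IntervalIntegrable
          (fun s => F s * (s * (a:ℝ) * S (a-1) b s + (b:ℝ) * S a (b-1) s)) volume 0 t := by
        rw [intervalIntegrable_iff_integrableOn_Ioc_of_le ht0]
        apply Integrable.mono' ((intervalIntegrable_iff_integrableOn_Ioc_of_le ht0).mp hintg) hfm
        rw [ae_restrict_iff' measurableSet_Ioc]
        apply Filter.Eventually.of_forall
        intro s hsIoc
        have hsIcc : s ∈ Set.Icc (0:ℝ) t := Set.Ioc_subset_Icc_self hsIoc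
        rw [Real.norm_of_nonneg (hfnn s hsIcc)]
        exact hpt s hsIcc
      have hI1 : ∫ s in (0:ℝ)..t, φ₁ s ≤ E * Real.log (2+t) ^ (2*a) := by
        have heq1 : ∫ s in (0:ℝ)..t, φ₁ s
            = E * (Real.log (2+t) ^ (2*a) - Real.log 2 ^ (2*a)) := by
          simp only [hφ₁def]
          rw [intervalIntegral.integral_const_mul, int_logpow a t ht0]
        rw [heq1]
        have h1 : (0:ℝ) ≤ Real.log 2 ^ (2*a) := by positivity
        nlinarith [mul_nonneg hE.le h1]
      have hI2 : ∫ s in (0:ℝ)..t, φ₂ s ≤ 8 * E * M * (c8 * Real.log (2+t) ^ (2*a)) := by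
        have heq2 : ∫ s in (0:ℝ)..t, φ₂ s
            = (E * (b:ℝ) * M) * ∫ s in (0:ℝ)..t, (1+s) ^ (-(3/2) : ℝ) := by
          rw [← intervalIntegral.integral_const_mul]
          apply intervalIntegral.integral_congr
          intro s hs
          simp only [hφ₂def]
          ring
        have hbM : (0:ℝ) ≤ E * (b:ℝ) * M :=
          mul_nonneg (mul_nonneg hE.le (Nat.cast_nonneg b)) hM.le
        have h2 := mul_le_mul_of_nonneg_left (int_rpow32 t ht0) hbM
        have hb4 : (b:ℝ) ≤ 4 := by exact_mod_cast hb
        have h3 : (E * (b:ℝ) * M) * 2 ≤ 8 * E * M := by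
          nlinarith [mul_nonneg hE.le hM.le]
        have hone := aux_one_le (Real.log (2+t)) hLt (2*a) (by omega)
        rw [← hc8def] at hone
        have h4 : 8 * E * M ≤ 8 * E * M * (c8 * Real.log (2+t) ^ (2*a)) :=
          le_mul_of_one_le_right (mul_nonneg (mul_nonneg (by norm_num) hE.le) hM.le) hone
        rw [heq2]
        linarith
      have hrec2 := hrec a b ha hb t ht
      have hmono := intervalIntegral.integral_mono_on ht0 hintf hintg hpt
      have hsplit : (∫ s in (0:ℝ)..t, (φ₁ s + φ₂ s))
          = (∫ s in (0:ℝ)..t, φ₁ s) + ∫ s in (0:ℝ)..t, φ₂ s :=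
        intervalIntegral.integral_add hint1 hint2
      have hinit := hSinit a b ha hb
      have hXnn : (0:ℝ) ≤ Real.log (2+t) ^ (2*a) := pow_nonneg hLt0 _
      have hfinal : E * Real.log (2+t) ^ (2*a) + 8*E*M*(c8 * Real.log (2+t) ^ (2*a))
          ≤ K' * ε₀ * ε₁ * Real.log (2+t) ^ (2*a) := by
        have hE2 : E * (1 + 8*M*c8) ≤ K' * ε₀ * ε₁ := by
          have hsq : ε₁^2 ≤ ε₁ := by nlinarith
          have step1 : E * (1 + 8*M*c8) = (C * ε₀ * ((1+K)*c8) * (1 + 8*M*c8)) * ε₁^2 := by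
            rw [hEdef]; ring
          have hcnn : (0:ℝ) ≤ C * ε₀ * ((1+K)*c8) * (1 + 8*M*c8) := by
            apply mul_nonneg (mul_nonneg (mul_nonneg hC.le hε₀.le)
              (mul_nonneg (by linarith) hc8pos.le))
            nlinarith
          have step2 := mul_le_mul_of_nonneg_left hsq hcnn
          have step3 : (C * ε₀ * ((1+K)*c8) * (1 + 8*M*c8)) * ε₁ ≤ K' * ε₀ * ε₁ := by
            rw [hK'def]
            nlinarith [mul_nonneg (mul_nonneg hK0 hε₀.le) hε₁.le]
          linarith
        calc E * Real.log (2+t) ^ (2*a) + 8*E*M*(c8 * Real.log (2+t) ^ (2*a))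
            = (E * (1 + 8*M*c8)) * Real.log (2+t) ^ (2*a) := by ring
          _ ≤ (K' * ε₀ * ε₁) * Real.log (2+t) ^ (2*a) :=
              mul_le_mul_of_nonneg_right hE2 hXnn
          _ = K' * ε₀ * ε₁ * Real.log (2+t) ^ (2*a) := by ring
      linarith [hrec2, hmono, hsplit, hI1, hI2, hinit, hfinal]

noncomputable section

open Real

/-- Moment propagation: from the recursive integral inequalities on the moments `S_{a,b}`
(`0 ≤ a,b ≤ 4`) and the field decay `F(s) ≤ C ε₁² (1+s²)⁻¹ log(2+s)`, one gets
`S_{a,b}(t) ≤ ε₀ + C' ε₀ ε₁ (log(2+t))^{2a}`. (Here the convention `S_{-1,b} = S_{a,-1} = 0`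
is implemented using the vanishing coefficients `a = 0`, `b = 0` and truncated `ℕ`
subtraction.) -/
theorem moment_propagation
    (C : ℝ) (hC : 0 < C) :
    ∃ C' > (0 : ℝ),
      ∀ (ε₀ ε₁ T : ℝ), 0 < ε₀ → ε₀ ≤ 1 → 0 < ε₁ → ε₁ ≤ 1 → 0 < T →
      ∀ (F : ℝ → ℝ) (S : ℕ → ℕ → ℝ → ℝ),
        Measurable F →
        (∀ s ∈ Set.Icc (0 : ℝ) T, 0 ≤ F s) →
        (∀ s ∈ Set.Icc (0 : ℝ) T,
          F s ≤ C * ε₁ ^ 2 * (1 + s ^ 2)⁻¹ * Real.log (2 + s)) →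
        (∀ a b : ℕ, a ≤ 4 → b ≤ 4 → ContinuousOn (S a b) (Set.Icc 0 T)) →
        (∀ a b : ℕ, a ≤ 4 → b ≤ 4 → ∀ t ∈ Set.Icc (0 : ℝ) T, 0 ≤ S a b t) →
        (∀ t ∈ Set.Icc (0 : ℝ) T, S 0 0 t = S 0 0 0) →
        (∀ a b : ℕ, a ≤ 4 → b ≤ 4 → S a b 0 ≤ ε₀) →
        (∀ a b : ℕ, a ≤ 4 → b ≤ 4 → ∀ t ∈ Set.Icc (0 : ℝ) T,
          S a b t ≤ S a b 0 + ∫ s in (0 : ℝ)..t,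
            F s * (s * (a : ℝ) * S (a - 1) b s + (b : ℝ) * S a (b - 1) s)) →
        ∀ a b : ℕ, a ≤ 4 → b ≤ 4 → ∀ t ∈ Set.Icc (0 : ℝ) T,
          S a b t ≤ ε₀ + C' * ε₀ * ε₁ * (Real.log (2 + t)) ^ (2 * a) := by
  obtain ⟨K, hK1, hK⟩ := key_lemma C hC 8
  refine ⟨K, by linarith, ?_⟩
  intro ε₀ ε₁ T hε₀ hε₀1 hε₁ hε₁1 hT F S hFm hF0 hFb hScont hSnn hS00 hSinit hrec a b ha hb t ht
  exact hK ε₀ ε₁ T hε₀ hε₀1 hε₁ hε₁1 hT F S hFm hF0 hFb hScont hSnn hS00 hSinit hrec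
    a b ha hb (by omega) t ht
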